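/- Let r be a landmark, B a batch update transforming G into G', and v a vertex with P_G(r,v) ≠ P_{G'}(r,v). Then there is an update edge (a,b) ∈ B with d_G(r,a) + 1 ≤ d_G(r,b) (i.e., b is the anchor) and d_G(r,v) ≥ (d_G(r,a) + 1) + d_{G'}(b,v). -/

import Mathlib

open scoped Classical

variable {V : Type*}

namespace BatchHL

/-- `l` is a walk in `G` from `r` to `v`, given as its (nonempty) list of visited vertices. -/
def IsWalk (G : SimpleGraph V) (r v : V) (l : List V) : Prop :=
  l ≠ [] ∧ l.head? = some r ∧ l.getLast? = some v ∧ l.Chain' G.Adj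

/-- The length (number of edges) of a walk given as a list of vertices. -/
def len (l : List V) : ℕ := l.length - 1

/-- The walk `l` passes through the (undirected) edge `(a, b)`. -/
def Passes (l : List V) (a b : V) : Prop :=
  (a, b) ∈ l.zip l.tail ∨ (b, a) ∈ l.zip l.tail

/-- `P_G(r,v)`: the set of all shortest paths between `r` and `v` in `G`. -/
def SPaths (G : SimpleGraph V) (r v : V) : Set (List V) :=
  {l | IsWalk G r v l ∧ ∀ l', IsWalk G r v l' → l.length ≤ l'.length}

/-- `(a,b)` is an edge deleted by the batch update turning `G` into `G'`. -/
def DeletedEdge (G G' : SimpleGraph V) (a b : V) : Prop := G.Adj a b ∧ ¬ G'.Adj a b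

/-- `(a,b)` is an edge inserted by the batch update turning `G` into `G'`. -/
def InsertedEdge (G G' : SimpleGraph V) (a b : V) : Prop := G'.Adj a b ∧ ¬ G.Adj a b

/-- `(a,b)` is an edge of the batch update `B` turning `G` into `G'`. -/
def UpdatedEdge (G G' : SimpleGraph V) (a b : V) : Prop :=
  InsertedEdge G G' a b ∨ DeletedEdge G G' a b

/-- The walk `l` passes through a deleted edge. -/
def PassesDeleted (G G' : SimpleGraph V) (l : List V) : Prop :=
  ∃ a b, DeletedEdge G G' a b ∧ Passes l a b

/-- The walk `l` passes through an inserted edge. -/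
def PassesInserted (G G' : SimpleGraph V) (l : List V) : Prop :=
  ∃ a b, InsertedEdge G G' a b ∧ Passes l a b

/-- `v` is affected w.r.t. landmark `r` iff the set of shortest paths changes. -/
def Affected (G G' : SimpleGraph V) (r v : V) : Prop := SPaths G r v ≠ SPaths G' r v

/-- A composite path from `r` to `v`: a prefix lying in `G` followed by a suffix lying in `G'`. -/
def IsComposite (G G' : SimpleGraph V) (r v : V) (l : List V) : Prop :=
  ∃ w l₁ l₂, IsWalk G r w l₁ ∧ IsWalk G' w v l₂ ∧ l = l₁ ++ l₂.tail

/-- A significant composite path: a composite path whose `G`-prefix passes through a deleted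
edge and whose `G'`-suffix passes through an inserted edge. -/
def IsSigComposite (G G' : SimpleGraph V) (r v : V) (l : List V) : Prop :=
  ∃ w l₁ l₂, IsWalk G r w l₁ ∧ IsWalk G' w v l₂ ∧ l = l₁ ++ l₂.tail ∧
    PassesDeleted G G' l₁ ∧ PassesInserted G G' l₂

/-- `v` is composite-path affected w.r.t. `r`. -/
def CPAffected (G G' : SimpleGraph V) (r v : V) : Prop :=
  Affected G G' r v ∨ ∃ l, IsSigComposite G G' r v l ∧ (len l : ℕ∞) ≤ G.edist r v

/-- A distance labelling: each label entry `(r, δ) ∈ L v` satisfies `δ = d_G(r,v)`. -/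
def IsLabelling (G : SimpleGraph V) (L : V → Set (V × ℕ∞)) : Prop :=
  ∀ v r δ, (r, δ) ∈ L v → δ = G.edist r v

/-- A 2-hop cover labelling: a distance labelling such that every pair `s, t` has a common
hub `r` lying on a shortest path between `s` and `t`. -/
def Is2HopCover (G : SimpleGraph V) (L : V → Set (V × ℕ∞)) : Prop :=
  IsLabelling G L ∧ ∀ s t : V, ∃ r, (r, G.edist r s) ∈ L s ∧ (r, G.edist r t) ∈ L t ∧
    G.edist s r + G.edist r t = G.edist s t

/-- A highway cover labelling `Γ = (H, L)` over `G` with landmarks `R`.  The highway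
distances `δ_H(r,r_i)` are by definition the graph distances `d_G(r,r_i)`. -/
def IsHighwayCover (G : SimpleGraph V) (R : Set V) (L : V → Set (V × ℕ∞)) : Prop :=
  (∀ v r δ, (r, δ) ∈ L v → r ∈ R ∧ δ = G.edist r v) ∧
  ∀ v, v ∉ R → ∀ r ∈ R,
    G.edist r v = sInf {x | ∃ ri δ, (ri, δ) ∈ L v ∧ x = δ + G.edist r ri}

/-- The landmark length / landmark distance values: `⊤` for "no path", otherwise a pair of a
length and a landmark flag (a `Prop`). -/
abbrev LLen := WithTop (ℕ × Prop)

/-- Lexicographic order on landmark lengths, with flag ordering `True < False`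
(i.e. `x ≤ y` at equal length iff `y`'s flag implies `x`'s flag). -/
def llLe : LLen → LLen → Prop
  | _, none => True
  | none, some _ => False
  | some a, some b => a.1 < b.1 ∨ (a.1 = b.1 ∧ (b.2 → a.2))

/-- Strict lexicographic order on landmark lengths. -/
def llLt (x y : LLen) : Prop := llLe x y ∧ ¬ llLe y x

/-- The extension operator `⊕`: `(d,l) ⊕ w = (d+1, True)` if `w ∈ R∖{r}`, else `(d+1, l)`. -/
def oplus (R : Set V) (r : V) : LLen → V → LLen
  | none, _ => none
  | some a, w => some (a.1 + 1, (w ∈ R ∧ w ≠ r) ∨ a.2)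

/-- The landmark length `lml(l)` of a walk `l` starting at `r`: its length together with the
flag recording whether it passes through a landmark other than `r`. -/
def lmLen (R : Set V) (r : V) (l : List V) : LLen :=
  some (len l, ∃ w ∈ l, w ∈ R ∧ w ≠ r)

/-- The landmark distance `d^L_G(r,v)`: the lexicographically minimal landmark length of a
walk from `r` to `v` (with `True < False` on flags), `⊤` if there is none.  Explicitly, its
length component is the minimal walk length and its flag holds iff some walk of minimal
length passes through a landmark other than `r`. -/
noncomputable def lmDist (G : SimpleGraph V) (R : Set V) (r v : V) : LLen :=
  if ∃ l, IsWalk G r v l then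
    some (sInf {n | ∃ l, IsWalk G r v l ∧ len l = n},
      ∃ l, IsWalk G r v l ∧ len l = sInf {n | ∃ l', IsWalk G r v l' ∧ len l' = n} ∧
        ∃ w ∈ l, w ∈ R ∧ w ≠ r)
  else ⊤

/-- Order on extended landmark lengths `(landmark length, deletion flag)`, lexicographic with
`True < False` on the deletion flag. -/
def ellLe (x y : LLen × Prop) : Prop := llLt x.1 y.1 ∨ (x.1 = y.1 ∧ (y.2 → x.2))

/-- Strict order on extended landmark lengths. -/
def ellLt (x y : LLen × Prop) : Prop := ellLe x y ∧ ¬ ellLe y x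

/-- `β(r,v) = (d^L_G(r,v), True)`. -/
noncomputable def beta (G : SimpleGraph V) (R : Set V) (r v : V) : LLen × Prop :=
  (lmDist G R r v, True)

/-- The distance bound `d_bou(u, S)` of `u` w.r.t. `S` in `G'`. -/
noncomputable def dbou (G' : SimpleGraph V) (r : V) (S : Set V) (u : V) : ℕ∞ :=
  ⨅ (w : V) (_ : G'.Adj u w ∧ w ∉ S), (G'.edist r w + 1)

/-- The set `{ d^L_{G'}(r,w) ⊕ v | w ∈ N_{G'}(v) ∖ S }`, whose lexicographic minimum is the
landmark distance bound `d^L_bou(v,S)`. -/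
noncomputable def lmBouSet (G' : SimpleGraph V) (R : Set V) (r v : V) (S : Set V) :
    Set LLen :=
  {x | ∃ w, G'.Adj v w ∧ w ∉ S ∧ x = oplus R r (lmDist G' R r w) v}

/-- The subgraph `G[V ∖ R]` obtained by removing all landmarks (landmarks become isolated). -/
def removeLandmarks (G : SimpleGraph V) (R : Set V) : SimpleGraph V where
  Adj u w := G.Adj u w ∧ u ∉ R ∧ w ∉ R
  symm := ⟨fun u w ⟨h, hu, hw⟩ => ⟨h.symm, hw, hu⟩⟩
  loopless := ⟨fun u ⟨h, _, _⟩ => G.loopless.irrefl u h⟩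

section Aux

open SimpleGraph

lemma isWalk_support {G : SimpleGraph V} {r v : V} (p : G.Walk r v) :
    IsWalk G r v p.support := by
  refine ⟨p.support_ne_nil, ?_, ?_, p.isChain_adj_support⟩
  · rw [List.head?_eq_head p.support_ne_nil, p.head_support]
  · rw [List.getLast?_eq_getLast p.support_ne_nil, p.getLast_support]

lemma isWalk_chain {G G' : SimpleGraph V} {r v : V} (p : G.Walk r v)
    (h : p.support.Chain' G'.Adj) : IsWalk G' r v p.support :=
  ⟨p.support_ne_nil, (isWalk_support p).2.1, (isWalk_support p).2.2.1, h⟩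

lemma len_support {G : SimpleGraph V} {r v : V} (p : G.Walk r v) :
    len p.support = p.length := by
  simp [len, p.length_support]

lemma exists_walk_of_isWalk {G : SimpleGraph V} {r v : V} {l : List V}
    (h : IsWalk G r v l) : ∃ p : G.Walk r v, p.support = l := by
  obtain ⟨hne, hhd, hlast, hch⟩ := h
  induction l generalizing r with
  | nil => exact absurd rfl hne
  | cons x t ih =>
    simp only [List.head?_cons, Option.some.injEq] at hhd
    subst hhd
    cases t with
    | nil =>
      simp only [List.getLast?_singleton, Option.some.injEq] at hlast
      subst hlast
      exact ⟨SimpleGraph.Walk.nil, rfl⟩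
    | cons y t' =>
      have hadj : G.Adj x y := (List.isChain_cons_cons.mp hch).1
      have hch' : (y :: t').Chain' G.Adj := (List.isChain_cons_cons.mp hch).2
      have hlast' : (y :: t').getLast? = some v := by
        rwa [List.getLast?_cons_cons] at hlast
      obtain ⟨q, hq⟩ := ih (by simp) rfl hlast' hch'
      exact ⟨SimpleGraph.Walk.cons hadj q, by simp [hq]⟩

lemma edist_le_len {G : SimpleGraph V} {r v : V} {l : List V} (h : IsWalk G r v l) :
    G.edist r v ≤ (len l : ℕ∞) := by
  obtain ⟨p, hp⟩ := exists_walk_of_isWalk h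
  calc G.edist r v ≤ p.length := SimpleGraph.edist_le p
  _ = (len l : ℕ∞) := by rw [← hp, len_support]

lemma spaths_len {G : SimpleGraph V} {r v : V} {l : List V} (h : l ∈ SPaths G r v) :
    (len l : ℕ∞) = G.edist r v := by
  refine le_antisymm ?_ (edist_le_len h.1)
  have hne : G.edist r v ≠ ⊤ := fun ht => by
    simpa [ht] using edist_le_len h.1
  obtain ⟨p, hp⟩ := SimpleGraph.exists_walk_of_edist_ne_top hne
  have hlen := h.2 p.support (isWalk_support p)
  have hnil : l ≠ [] := h.1.1
  have h1 : l.length = len l + 1 := by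
    have := List.length_pos_iff.mpr hnil
    simp [len]; omega
  have h2 : p.support.length = p.length + 1 := p.length_support
  rw [h1, h2] at hlen
  have : len l ≤ p.length := by omega
  calc G.edist r v = (p.length : ℕ∞) := hp.symm
  _ ≥ (len l : ℕ∞) := by exact_mod_cast this
  -- orientation: want len l ≤ edist; rewrite
  
lemma mem_spaths_of {G : SimpleGraph V} {r v : V} {l : List V}
    (h : IsWalk G r v l) (hl : (len l : ℕ∞) = G.edist r v) : l ∈ SPaths G r v := by
  refine ⟨h, fun l' h' => ?_⟩
  have h1 : l.length = len l + 1 := by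
    have := List.length_pos_iff.mpr h.1; simp [len]; omega
  have h2 : l'.length = len l' + 1 := by
    have := List.length_pos_iff.mpr h'.1; simp [len]; omega
  have : (len l : ℕ∞) ≤ (len l' : ℕ∞) := hl ▸ edist_le_len h'
  have : len l ≤ len l' := by exact_mod_cast this
  omega

lemma lemB (G G' : SimpleGraph V) (r : V) :
    ∀ (n : ℕ) (u : V), G.edist r u = (n : ℕ∞) → (n : ℕ∞) < G'.edist r u →
    ∃ a b, DeletedEdge G G' a b ∧ G.edist r a + 1 ≤ G.edist r b ∧
      G.edist r a + 1 + G'.edist b u ≤ G.edist r u := by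
  intro n
  induction n with
  | zero =>
    intro u hu hlt
    have : r = u := SimpleGraph.edist_eq_zero_iff.mp (by exact_mod_cast hu)
    subst this
    simp [SimpleGraph.edist_self] at hlt
  | succ n ih =>
    intro u hu hlt
    obtain ⟨p, hp⟩ := SimpleGraph.exists_walk_of_edist_eq_coe hu
    have hne : u ≠ r := by
      intro hur; subst hur
      rw [SimpleGraph.edist_self] at hu
      exact absurd hu.symm (by exact_mod_cast Nat.succ_ne_zero n)
    obtain ⟨w, hadj', q, hq⟩ := SimpleGraph.Walk.exists_eq_cons_of_ne hne p.reverse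
    -- hadj' : G.Adj u w, q : G.Walk w r
    have hqlen : q.length = n := by
      have : p.reverse.length = p.length := p.length_reverse
      rw [hq] at this
      simp [SimpleGraph.Walk.length_cons] at this
      omega
    have hadj : G.Adj w u := hadj'.symm
    have hwu1 : G.edist w u = 1 := SimpleGraph.edist_eq_one_iff_adj.mpr hadj
    have hw_le : G.edist r w ≤ (n : ℕ∞) := by
      have := SimpleGraph.edist_le q.reverse
      rwa [SimpleGraph.Walk.length_reverse, hqlen] at this
    have hw_ge : (n : ℕ∞) ≤ G.edist r w := by
      by_contra hc
      push_neg at hc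
      have hfin : G.edist r w ≠ ⊤ := ne_top_of_lt hc
      have h1 : G.edist r w + 1 ≤ (n : ℕ∞) := (ENat.add_one_le_iff hfin).mpr hc
      have h2 : G.edist r u ≤ G.edist r w + 1 := by
        calc G.edist r u ≤ G.edist r w + G.edist w u := SimpleGraph.edist_triangle
        _ = G.edist r w + 1 := by rw [hwu1]
      have : G.edist r u ≤ (n : ℕ∞) := le_trans h2 h1
      rw [hu] at this
      exact absurd this (by
        push_cast
        exact not_le.mpr (by exact_mod_cast Nat.lt_succ_self n))
    have hwn : G.edist r w = (n : ℕ∞) := le_antisymm hw_le hw_ge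
    by_cases hdel : G'.Adj w u
    · have hwu1' : G'.edist w u = 1 := SimpleGraph.edist_eq_one_iff_adj.mpr hdel
      have hlt' : (n : ℕ∞) < G'.edist r w := by
        by_contra hc
        push_neg at hc
        have : G'.edist r u ≤ (n : ℕ∞) + 1 := by
          calc G'.edist r u ≤ G'.edist r w + G'.edist w u := SimpleGraph.edist_triangle
          _ = G'.edist r w + 1 := by rw [hwu1']
          _ ≤ (n : ℕ∞) + 1 := add_le_add_left hc 1
        rw [show ((n : ℕ∞) + 1) = ((n + 1 : ℕ) : ℕ∞) by push_cast; ring] at this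
        exact absurd hlt (not_lt.mpr this)
      obtain ⟨a, b, hD, hA, hS⟩ := ih w hwn hlt'
      refine ⟨a, b, hD, hA, ?_⟩
      calc G.edist r a + 1 + G'.edist b u
          ≤ G.edist r a + 1 + (G'.edist b w + G'.edist w u) := by
            exact add_le_add_right SimpleGraph.edist_triangle _
        _ = (G.edist r a + 1 + G'.edist b w) + 1 := by rw [hwu1']; ring
        _ ≤ G.edist r w + 1 := add_le_add_left hS 1
        _ = G.edist r u := by rw [hwn, hu]; push_cast; ring
    · refine ⟨w, u, ⟨hadj, hdel⟩, ?_, ?_⟩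
      · rw [hwn, hu]; push_cast; exact le_refl _
      · rw [SimpleGraph.edist_self, add_zero, hwn, hu]; push_cast; exact le_refl _

lemma lemFI (G G' : SimpleGraph V) : ∀ {x y : V} (p : G'.Walk x y),
    p.support.Chain' G.Adj ∨ ∃ (a b : V) (k : ℕ), InsertedEdge G G' a b ∧
      G.edist x a ≤ (k : ℕ∞) ∧ (k : ℕ∞) + 1 + G'.edist b y ≤ (p.length : ℕ∞) := by
  intro x y p
  induction p with
  | nil => left; simp [List.Chain']
  | @cons x w y h q ih =>
    by_cases hG : G.Adj x w
    · rcases ih with hc | ⟨a, b, k, hins, hka, hsum⟩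
      · left
        rw [SimpleGraph.Walk.support_cons, q.support_eq_cons]
        exact List.isChain_cons_cons.mpr ⟨hG, by rwa [← q.support_eq_cons]⟩
      · right
        refine ⟨a, b, k + 1, hins, ?_, ?_⟩
        · calc G.edist x a ≤ G.edist x w + G.edist w a := SimpleGraph.edist_triangle
          _ ≤ 1 + (k : ℕ∞) := add_le_add (le_of_eq (SimpleGraph.edist_eq_one_iff_adj.mpr hG)) hka
          _ = ((k + 1 : ℕ) : ℕ∞) := by push_cast; ring
        · calc ((k + 1 : ℕ) : ℕ∞) + 1 + G'.edist b y
              = ((k : ℕ∞) + 1 + G'.edist b y) + 1 := by push_cast; ring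
          _ ≤ (q.length : ℕ∞) + 1 := add_le_add_left hsum 1
          _ = ((SimpleGraph.Walk.cons h q).length : ℕ∞) := by
              rw [SimpleGraph.Walk.length_cons]; push_cast; ring
    · right
      refine ⟨x, w, 0, ⟨h, hG⟩, by simp [SimpleGraph.edist_self], ?_⟩
      calc (0 : ℕ∞) + 1 + G'.edist w y = G'.edist w y + 1 := by ring
      _ ≤ (q.length : ℕ∞) + 1 := add_le_add_left (SimpleGraph.edist_le q) 1
      _ = ((SimpleGraph.Walk.cons h q).length : ℕ∞) := by
          rw [SimpleGraph.Walk.length_cons]; push_cast; ring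

lemma lemLD (G G' : SimpleGraph V) : ∀ {x y : V} (p : G.Walk x y),
    p.support.Chain' G'.Adj ∨ ∃ (a b : V) (k m : ℕ), DeletedEdge G G' a b ∧
      G.edist x a ≤ (k : ℕ∞) ∧ G.edist b y ≤ (m : ℕ∞) ∧ G'.edist b y ≤ (m : ℕ∞) ∧
      k + 1 + m = p.length := by
  intro x y p
  induction p with
  | nil => left; simp [List.Chain']
  | @cons x w y h q ih =>
    rcases ih with hc | ⟨a, b, k, m, hdel, hka, hbm, hbm', hkm⟩
    · by_cases hG' : G'.Adj x w
      · left
        rw [SimpleGraph.Walk.support_cons, q.support_eq_cons]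
        exact List.isChain_cons_cons.mpr ⟨hG', by rwa [← q.support_eq_cons]⟩
      · right
        refine ⟨x, w, 0, q.length, ⟨h, hG'⟩, by simp [SimpleGraph.edist_self], ?_, ?_, by simp [SimpleGraph.Walk.length_cons, Nat.add_comm]⟩
        · exact SimpleGraph.edist_le q
        · have := edist_le_len (isWalk_chain q hc)
          rwa [len_support] at this
    · right
      refine ⟨a, b, k + 1, m, hdel, ?_, hbm, hbm', by simp [SimpleGraph.Walk.length_cons]; omega⟩
      calc G.edist x a ≤ G.edist x w + G.edist w a := SimpleGraph.edist_triangle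
      _ ≤ 1 + (k : ℕ∞) := add_le_add (le_of_eq (SimpleGraph.edist_eq_one_iff_adj.mpr h)) hka
      _ = ((k + 1 : ℕ) : ℕ∞) := by push_cast; ring

lemma step_ins (G G' : SimpleGraph V) (r v a b : V) (k : ℕ)
    (hins : InsertedEdge G G' a b) (hka : G.edist r a ≤ (k : ℕ∞))
    (hsum : (k : ℕ∞) + 1 + G'.edist b v ≤ G'.edist r v)
    (hfin : G'.edist r v ≠ ⊤) (hle : G'.edist r v ≤ G.edist r v) :
    ∃ a' b', UpdatedEdge G G' a' b' ∧ G.edist r a' + 1 ≤ G.edist r b' ∧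
      G.edist r a' + 1 + G'.edist b' v ≤ G.edist r v := by
  by_cases hanch : G.edist r a + 1 ≤ G.edist r b
  · refine ⟨a, b, Or.inl hins, hanch, ?_⟩
    calc G.edist r a + 1 + G'.edist b v ≤ (k : ℕ∞) + 1 + G'.edist b v := by
          exact add_le_add_left (add_le_add_left hka 1) _
    _ ≤ G'.edist r v := hsum
    _ ≤ G.edist r v := hle
  · push_neg at hanch
    have hafin : G.edist r a ≠ ⊤ := ne_top_of_le_ne_top (by exact ENat.coe_ne_top k) hka
    have hba : G.edist r b ≤ G.edist r a := by
      have := (ENat.lt_add_one_iff hafin).mp hanch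
      exact this
    have hbk : G.edist r b ≤ (k : ℕ∞) := le_trans hba hka
    have hebv : G'.edist b v ≠ ⊤ := by
      intro ht
      rw [ht] at hsum
      simp at hsum
      exact hfin (top_le_iff.mp (le_of_eq hsum.symm) |>.symm ▸ rfl)
    have hge : (k : ℕ∞) + 1 ≤ G'.edist r b := by
      have htr : G'.edist r v ≤ G'.edist r b + G'.edist b v := SimpleGraph.edist_triangle
      have h2 : (k : ℕ∞) + 1 + G'.edist b v ≤ G'.edist r b + G'.edist b v := le_trans hsum htr
      exact (WithTop.add_le_add_iff_right hebv).mp h2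
    obtain ⟨m, hm⟩ : ∃ m : ℕ, G.edist r b = (m : ℕ∞) := by
      have : G.edist r b ≠ ⊤ := ne_top_of_le_ne_top (ENat.coe_ne_top k) hbk
      exact ⟨(G.edist r b).toNat, (ENat.coe_toNat this).symm⟩
    have hlt : (m : ℕ∞) < G'.edist r b := by
      rw [← hm]
      calc G.edist r b ≤ (k : ℕ∞) := hbk
      _ < (k : ℕ∞) + 1 := by exact ENat.lt_add_one_iff (ENat.coe_ne_top k) |>.mpr le_rfl
      _ ≤ G'.edist r b := hge
    obtain ⟨a₀, b₀, hD, hA, hS⟩ := lemB G G' r m b hm hlt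
    refine ⟨a₀, b₀, Or.inr hD, hA, ?_⟩
    calc G.edist r a₀ + 1 + G'.edist b₀ v
        ≤ G.edist r a₀ + 1 + (G'.edist b₀ b + G'.edist b v) :=
          add_le_add_right SimpleGraph.edist_triangle _
    _ = (G.edist r a₀ + 1 + G'.edist b₀ b) + G'.edist b v := by ring
    _ ≤ G.edist r b + G'.edist b v := add_le_add_left hS _
    _ ≤ (k : ℕ∞) + G'.edist b v := add_le_add_left hbk _
    _ ≤ (k : ℕ∞) + 1 + G'.edist b v := by
        exact add_le_add_left (le_add_right le_rfl) _
    _ ≤ G'.edist r v := hsum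
    _ ≤ G.edist r v := hle

end Aux

/-- **shared pattern, Eq. 2.** If `v` is affected w.r.t. `r` by the batch
update turning `G` into `G'`, then there is an update edge `(a,b)` with
`d_G(r,a) + 1 ≤ d_G(r,b)` (so `b` is its anchor) such that
`d_G(r,v) ≥ (d_G(r,a) + 1) + d_{G'}(b,v)`. -/
theorem shared_pattern (G G' : SimpleGraph V) (r v : V)
    (h : Affected G G' r v) :
    ∃ a b, UpdatedEdge G G' a b ∧
      G.edist r a + 1 ≤ G.edist r b ∧
      G.edist r a + 1 + G'.edist b v ≤ G.edist r v := by
  rcases lt_trichotomy (G'.edist r v) (G.edist r v) with hlt | heq | hgt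
  · have hfin : G'.edist r v ≠ ⊤ := ne_top_of_lt hlt
    obtain ⟨p, hp⟩ := SimpleGraph.exists_walk_of_edist_ne_top hfin
    rcases lemFI G G' p with hc | ⟨a, b, k, hins, hka, hsum⟩
    · exfalso
      have h1 : G.edist r v ≤ (len p.support : ℕ∞) := edist_le_len (isWalk_chain p hc)
      rw [len_support, hp] at h1
      exact absurd (lt_of_le_of_lt h1 hlt) (lt_irrefl _)
    · exact step_ins G G' r v a b k hins hka (by rwa [hp] at hsum) hfin hlt.le
  · by_cases htop : G.edist r v = ⊤
    · exfalso
      apply h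
      have e1 : SPaths G r v = ∅ := by
        ext l
        simp only [Set.mem_empty_iff_false, iff_false]
        intro hl
        have := edist_le_len hl.1
        rw [htop] at this
        simp at this
      have e2 : SPaths G' r v = ∅ := by
        ext l
        simp only [Set.mem_empty_iff_false, iff_false]
        intro hl
        have := edist_le_len hl.1
        rw [heq, htop] at this
        simp at this
      rw [e1, e2]
    · have hfin' : G'.edist r v ≠ ⊤ := by rw [heq]; exact htop
      obtain ⟨l, hl⟩ : ∃ l, ¬(l ∈ SPaths G r v ↔ l ∈ SPaths G' r v) := by
        by_contra hc
        push_neg at hc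
        exact h (Set.ext fun l => hc l)
      by_cases hm1 : l ∈ SPaths G r v
      · have hm2 : l ∉ SPaths G' r v := fun hm2 => hl ⟨fun _ => hm2, fun _ => hm1⟩
        obtain ⟨p, hps⟩ := exists_walk_of_isWalk hm1.1
        have hlenl : (len l : ℕ∞) = G.edist r v := spaths_len hm1
        have hplen : ((p.length : ℕ) : ℕ∞) = G.edist r v := by
          rw [← hlenl, ← hps, len_support]
        rcases lemLD G G' p with hc | ⟨a, b, k, m, hdel, hka, hbm, hbm', hkm⟩
        · exfalso
          apply hm2
          apply mem_spaths_of (hps ▸ isWalk_chain p hc)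
          rw [heq]
          exact hlenl
        · have hdm : G.edist r v = (k : ℕ∞) + 1 + m := by
            rw [← hplen, ← hkm]; push_cast; ring
          have hgeb : (k : ℕ∞) + 1 ≤ G.edist r b := by
            have h2 : (k : ℕ∞) + 1 + m ≤ G.edist r b + m := by
              calc (k : ℕ∞) + 1 + m = G.edist r v := hdm.symm
              _ ≤ G.edist r b + G.edist b v := SimpleGraph.edist_triangle
              _ ≤ G.edist r b + m := add_le_add_right hbm _
            exact (WithTop.add_le_add_iff_right (ENat.coe_ne_top m)).mp h2
          refine ⟨a, b, Or.inr hdel, ?_, ?_⟩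
          · calc G.edist r a + 1 ≤ (k : ℕ∞) + 1 := add_le_add_left hka 1
            _ ≤ G.edist r b := hgeb
          · calc G.edist r a + 1 + G'.edist b v ≤ (k : ℕ∞) + 1 + m :=
                add_le_add (add_le_add_left hka 1) hbm'
            _ = G.edist r v := hdm.symm
      · have hm2 : l ∈ SPaths G' r v := by
          by_contra hm2
          exact hl ⟨fun h1 => absurd h1 hm1, fun h2 => absurd h2 hm2⟩
        obtain ⟨p, hps⟩ := exists_walk_of_isWalk hm2.1
        have hlenl : (len l : ℕ∞) = G'.edist r v := spaths_len hm2
        have hplen : ((p.length : ℕ) : ℕ∞) = G'.edist r v := by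
          rw [← hlenl, ← hps, len_support]
        rcases lemFI G G' p with hc | ⟨a, b, k, hins, hka, hsum⟩
        · exfalso
          apply hm1
          apply mem_spaths_of (hps ▸ isWalk_chain p hc)
          rw [← heq]
          exact hlenl
        · exact step_ins G G' r v a b k hins hka (by rwa [hplen] at hsum) hfin' heq.le
  · obtain ⟨n, hn⟩ : ∃ n : ℕ, G.edist r v = (n : ℕ∞) :=
      ⟨(G.edist r v).toNat, (ENat.coe_toNat (ne_top_of_lt hgt)).symm⟩
    obtain ⟨a, b, hD, hA, hS⟩ := lemB G G' r n v hn (by rw [← hn]; exact hgt)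
    exact ⟨a, b, Or.inr hD, hA, hS⟩


end BatchHL
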